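/- Fix e ≥ 3 and I = Z/eZ. Let S⁺ = (j, j+1, ..., j+a-1), S⁻ = (k, k-1, ..., k-b+1), and let i = (i_1,...,i_{a+b}) ∈ Shuf(S⁺,S⁻). Let H(i) be the subgroup of S_{a+b} generated by the simple transpositions s_m with s_m·i = i, and let σ_i be the unique minimal-length element of Sh(i; S⁺, S⁻). Then Sh(i; S⁺, S⁻) = {hσ_i : h ∈ H(i)}; in particular |Sh(i; S⁺, S⁻)| = 2^t where t = #{r : 1 ≤ r ≤ a+b-1, i_r = i_{r+1}}. -/

import Mathlib

theorem Equiv.Perm.apply_inv_self {α : Type*} (f : Equiv.Perm α) (x : α) : f (f⁻¹ x) = x :=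
  Equiv.apply_symm_apply f x

theorem Equiv.Perm.inv_apply_self {α : Type*} (f : Equiv.Perm α) (x : α) : f⁻¹ (f x) = x :=
  Equiv.symm_apply_apply f x

namespace ShuffleCosetAux

open Equiv Finset

variable {e a b : ℕ} {j k : ZMod e}

def IsSh (a b : ℕ) (σ : Equiv.Perm ℕ) : Prop :=
  (∀ x, a + b ≤ x → σ x = x) ∧ (∀ x y, x < y → y < a → σ x < σ y) ∧
    (∀ x y, a ≤ x → x < y → y < a + b → σ x < σ y)

lemma IsSh.map_lt {σ : Equiv.Perm ℕ} (hσ : IsSh a b σ) {x : ℕ} (hx : x < a + b) :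
    σ x < a + b := by
  by_contra h
  push_neg at h
  have h2 : σ (σ x) = σ x := hσ.1 _ h
  have h3 := σ.injective h2
  omega

lemma IsSh.inv_lt {σ : Equiv.Perm ℕ} (hσ : IsSh a b σ) {p : ℕ} (hp : p < a + b) :
    σ⁻¹ p < a + b := by
  by_contra h
  push_neg at h
  have h2 : σ (σ⁻¹ p) = σ⁻¹ p := hσ.1 _ h
  rw [Equiv.Perm.apply_inv_self] at h2
  omega

lemma IsSh.inv_eq_self {σ : Equiv.Perm ℕ} (hσ : IsSh a b σ) {p : ℕ} (hp : a + b ≤ p) :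
    σ⁻¹ p = p := by
  have h2 : σ p = p := hσ.1 _ hp
  have := congrArg σ.symm h2
  simp only [Equiv.symm_apply_apply] at this
  exact this.symm

lemma IsSh.lt_iff₁ {σ : Equiv.Perm ℕ} (hσ : IsSh a b σ) {x y : ℕ} (hx : x < a) (hy : y < a) :
    σ x < σ y ↔ x < y := by
  constructor
  · intro h
    rcases lt_trichotomy x y with h' | h' | h'
    · exact h'
    · subst h'; exact absurd h (lt_irrefl _)
    · exact absurd (hσ.2.1 y x h' hx) (by omega)
  · intro h; exact hσ.2.1 x y h hy

lemma IsSh.lt_iff₂ {σ : Equiv.Perm ℕ} (hσ : IsSh a b σ) {x y : ℕ} (hx : a ≤ x) (hx2 : x < a + b)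
    (hy : a ≤ y) (hy2 : y < a + b) : σ x < σ y ↔ x < y := by
  constructor
  · intro h
    rcases lt_trichotomy x y with h' | h' | h'
    · exact h'
    · subst h'; exact absurd h (lt_irrefl _)
    · exact absurd (hσ.2.2 y x hy h' hx2) (by omega)
  · intro h; exact hσ.2.2 x y hx h hy2

lemma count1 {σ : Equiv.Perm ℕ} (hσ : IsSh a b σ) {p : ℕ} (hp : p < a + b)
    (h : σ⁻¹ p < a) :
    ((Finset.range p).filter fun q => σ⁻¹ q < a).card = σ⁻¹ p := by
  have himg : ((Finset.range p).filter fun q => σ⁻¹ q < a) = (Finset.range (σ⁻¹ p)).image σ := by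
    ext q
    simp only [mem_filter, mem_range, mem_image]
    constructor
    · rintro ⟨hq, hqa⟩
      refine ⟨σ⁻¹ q, ?_, (Equiv.Perm.apply_inv_self σ) q⟩
      have h1 : σ (σ⁻¹ q) < σ (σ⁻¹ p) := by
        rw [(Equiv.Perm.apply_inv_self σ), (Equiv.Perm.apply_inv_self σ)]; exact hq
      exact (hσ.lt_iff₁ hqa h).mp h1
    · rintro ⟨y, hy, rfl⟩
      have h1 : σ y < σ (σ⁻¹ p) := hσ.2.1 y _ hy h
      rw [(Equiv.Perm.apply_inv_self σ)] at h1
      refine ⟨h1, ?_⟩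
      rw [(Equiv.Perm.inv_apply_self σ)]; omega
  rw [himg, Finset.card_image_of_injective _ σ.injective, Finset.card_range]

lemma count2 {σ : Equiv.Perm ℕ} (hσ : IsSh a b σ) {p : ℕ} (hp : p < a + b)
    (h : a ≤ σ⁻¹ p) :
    ((Finset.range p).filter fun q => a ≤ σ⁻¹ q).card = σ⁻¹ p - a := by
  have hpn := hσ.inv_lt hp
  have himg : ((Finset.range p).filter fun q => a ≤ σ⁻¹ q) = (Finset.Ico a (σ⁻¹ p)).image σ := by
    ext q
    simp only [mem_filter, mem_range, mem_image, mem_Ico]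
    constructor
    · rintro ⟨hq, hqa⟩
      refine ⟨σ⁻¹ q, ⟨hqa, ?_⟩, (Equiv.Perm.apply_inv_self σ) q⟩
      have hqn : σ⁻¹ q < a + b := hσ.inv_lt (by omega)
      have h1 : σ (σ⁻¹ q) < σ (σ⁻¹ p) := by
        rw [(Equiv.Perm.apply_inv_self σ), (Equiv.Perm.apply_inv_self σ)]; exact hq
      exact (hσ.lt_iff₂ hqa hqn h hpn).mp h1
    · rintro ⟨y, ⟨hy1, hy2⟩, rfl⟩
      have h1 : σ y < σ (σ⁻¹ p) := hσ.2.2 y _ hy1 hy2 hpn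
      rw [(Equiv.Perm.apply_inv_self σ)] at h1
      refine ⟨h1, ?_⟩
      rw [(Equiv.Perm.inv_apply_self σ)]; omega
  rw [himg, Finset.card_image_of_injective _ σ.injective, Nat.card_Ico]

lemma countTot {σ : Equiv.Perm ℕ} (hσ : IsSh a b σ) :
    ((Finset.range (a + b)).filter fun q => σ⁻¹ q < a).card = a := by
  have himg : ((Finset.range (a + b)).filter fun q => σ⁻¹ q < a) = (Finset.range a).image σ := by
    ext q
    simp only [mem_filter, mem_range, mem_image]
    constructor
    · rintro ⟨hq, hqa⟩
      exact ⟨σ⁻¹ q, hqa, (Equiv.Perm.apply_inv_self σ) q⟩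
    · rintro ⟨y, hy, rfl⟩
      refine ⟨hσ.map_lt (by omega), ?_⟩
      rw [(Equiv.Perm.inv_apply_self σ)]; omega
  rw [himg, Finset.card_image_of_injective _ σ.injective, Finset.card_range]

lemma count_compl {σ : Equiv.Perm ℕ} (p : ℕ) :
    ((Finset.range p).filter fun q => a ≤ σ⁻¹ q).card
      + ((Finset.range p).filter fun q => σ⁻¹ q < a).card = p := by
  classical
  have h2 := Finset.card_filter_add_card_filter_not
    (s := Finset.range p) (p := fun q => a ≤ σ⁻¹ q)
  rw [Finset.card_range] at h2
  have h3 : ((Finset.range p).filter fun q => σ⁻¹ q < a)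
      = (Finset.range p).filter fun q => ¬ a ≤ σ⁻¹ q :=
    Finset.filter_congr (by intros; simp [not_le])
  rw [h3]
  simpa using h2

lemma determine {σ τ : Equiv.Perm ℕ} (hσ : IsSh a b σ) (hτ : IsSh a b τ)
    (h : ∀ p, p < a + b → (σ⁻¹ p < a ↔ τ⁻¹ p < a)) : σ = τ := by
  have key : ∀ p, σ⁻¹ p = τ⁻¹ p := by
    intro p
    by_cases hp : p < a + b
    · have hf : ((Finset.range p).filter fun q => σ⁻¹ q < a)
          = ((Finset.range p).filter fun q => τ⁻¹ q < a) := by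
        apply Finset.filter_congr
        intro q hq
        simp only [mem_range] at hq
        exact h q (by omega)
      by_cases hσp : σ⁻¹ p < a
      · have hτp : τ⁻¹ p < a := (h p hp).mp hσp
        have e1 := count1 hσ hp hσp
        have e2 := count1 hτ hp hτp
        rw [hf] at e1; omega
      · push_neg at hσp
        have hτp : a ≤ τ⁻¹ p := by
          by_contra h2; push_neg at h2; exact absurd ((h p hp).mpr h2) (by omega)
        have e1 := count2 hσ hp hσp
        have e2 := count2 hτ hp hτp
        have hfc : ((Finset.range p).filter fun q => a ≤ σ⁻¹ q)
            = ((Finset.range p).filter fun q => a ≤ τ⁻¹ q) := by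
          apply Finset.filter_congr
          intro q hq
          simp only [mem_range] at hq
          have hqn : q < a + b := by omega
          rw [← not_lt, ← not_lt]
          exact not_congr (h q hqn)
        rw [hfc] at e1
        omega
    · rw [hσ.inv_eq_self (by omega), hτ.inv_eq_self (by omega)]
  have hinv : σ⁻¹ = τ⁻¹ := Equiv.ext key
  have : σ⁻¹⁻¹ = τ⁻¹⁻¹ := by rw [hinv]
  simpa using this


def IsReal (a b : ℕ) (base i : ℕ → ZMod e) (σ : Equiv.Perm ℕ) : Prop :=
  IsSh a b σ ∧ i = base ∘ ⇑σ⁻¹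

def DFree (a b : ℕ) (i : ℕ → ZMod e) (σ : Equiv.Perm ℕ) : Prop :=
  ∀ m, m + 1 < a + b → i m = i (m + 1) → σ⁻¹ m < σ⁻¹ (m + 1)

lemma zmod_one (he : 3 ≤ e) : (1 : ZMod e) ≠ 0 := by
  haveI : Fact (1 < e) := ⟨by omega⟩
  exact one_ne_zero

lemma zmod_two (he : 3 ≤ e) : (2 : ZMod e) ≠ 0 := by
  intro h
  have h2 : ((2 : ℕ) : ZMod e) = 0 := by push_cast; exact h
  rw [ZMod.natCast_eq_zero_iff] at h2
  have := Nat.le_of_dvd (by norm_num) h2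
  omega

section Mixed

variable {base i : ℕ → ZMod e}

lemma mixed (he : 3 ≤ e) (hb1 : ∀ s, s < a → base s = j + (s : ZMod e))
    (hb2 : ∀ s, a ≤ s → base s = k - ((s - a : ℕ) : ZMod e))
    {σ : Equiv.Perm ℕ} (hr : IsReal a b base i σ) {m : ℕ} (hm : m + 1 < a + b)
    (heq : i m = i (m + 1)) :
    (σ⁻¹ m < a ∧ a ≤ σ⁻¹ (m + 1)) ∨ (a ≤ σ⁻¹ m ∧ σ⁻¹ (m + 1) < a) := by
  have hσ := hr.1
  have hm' : m < a + b := by omega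
  have hv1 : i m = base (σ⁻¹ m) := congrFun hr.2 m
  have hv2 : i (m + 1) = base (σ⁻¹ (m + 1)) := congrFun hr.2 (m + 1)
  by_cases c1 : σ⁻¹ m < a <;> by_cases c2 : σ⁻¹ (m + 1) < a
  · exfalso
    have e1 := count1 hσ hm' c1
    have e2 := count1 hσ hm c2
    rw [Finset.range_add_one, Finset.filter_insert, if_pos c1,
      Finset.card_insert_of_notMem (by simp)] at e2
    have hv : σ⁻¹ (m + 1) = σ⁻¹ m + 1 := by omega
    rw [hv1, hv2, hb1 _ c1, hb1 _ c2, hv] at heq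
    push_cast at heq
    exact zmod_one he (by linear_combination -heq)
  · exact Or.inl ⟨c1, le_of_not_gt c2⟩
  · exact Or.inr ⟨le_of_not_gt c1, c2⟩
  · exfalso
    push_neg at c1 c2
    have e1 := count2 hσ hm' c1
    have e2 := count2 hσ hm c2
    rw [Finset.range_add_one, Finset.filter_insert, if_pos c1,
      Finset.card_insert_of_notMem (by simp)] at e2
    have hlt1 : σ⁻¹ m < a + b := hσ.inv_lt hm'
    have hlt2 : σ⁻¹ (m + 1) < a + b := hσ.inv_lt hm
    have hv : σ⁻¹ (m + 1) - a = (σ⁻¹ m - a) + 1 := by omega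
    rw [hv1, hv2, hb2 _ c1, hb2 _ c2, hv] at heq
    push_cast at heq
    exact zmod_one he (by linear_combination heq)

lemma nonadj (he : 3 ≤ e) (hb1 : ∀ s, s < a → base s = j + (s : ZMod e))
    (hb2 : ∀ s, a ≤ s → base s = k - ((s - a : ℕ) : ZMod e))
    {σ : Equiv.Perm ℕ} (hr : IsReal a b base i σ) {m : ℕ} (hm : m + 2 < a + b)
    (h1 : i m = i (m + 1)) (h2 : i (m + 1) = i (m + 2)) : False := by
  have hσ := hr.1
  have hx1 := mixed he hb1 hb2 hr (show m + 1 < a + b by omega) h1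
  have hx2 := mixed he hb1 hb2 hr (show (m + 1) + 1 < a + b by omega) h2
  have h13 : i m = i (m + 2) := h1.trans h2
  have hv1 : i m = base (σ⁻¹ m) := congrFun hr.2 m
  have hv3 : i (m + 2) = base (σ⁻¹ (m + 2)) := congrFun hr.2 (m + 2)
  have hm' : m < a + b := by omega
  have hm2 : m + 2 < a + b := hm
  rcases hx1 with ⟨ha1, ha2⟩ | ⟨ha1, ha2⟩ <;> rcases hx2 with ⟨hc1, hc2⟩ | ⟨hc1, hc2⟩
  · omega
  · -- m : +, m+1 : -, m+2 : +
    replace hc2 : σ⁻¹ (m + 2) < a := hc2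
    have e1 := count1 hσ hm' ha1
    have e3 := count1 hσ hm2 hc2
    rw [show m + 2 = (m + 1) + 1 from rfl, Finset.range_add_one, Finset.filter_insert,
      if_neg (by omega), Finset.range_add_one, Finset.filter_insert, if_pos ha1,
      Finset.card_insert_of_notMem (by simp)] at e3
    have hv : σ⁻¹ (m + 2) = σ⁻¹ m + 1 := by
      rw [show m + 2 = (m + 1) + 1 from rfl]; omega
    rw [hv1, hv3, hb1 _ ha1, hb1 _ hc2, hv] at h13
    push_cast at h13
    exact zmod_one he (by linear_combination -h13)
  · -- m : -, m+1 : +, m+2 : -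
    replace hc2 : a ≤ σ⁻¹ (m + 2) := hc2
    have e1 := count2 hσ hm' ha1
    have e3 := count2 hσ hm2 hc2
    rw [show m + 2 = (m + 1) + 1 from rfl, Finset.range_add_one, Finset.filter_insert,
      if_neg (by omega), Finset.range_add_one, Finset.filter_insert, if_pos ha1,
      Finset.card_insert_of_notMem (by simp)] at e3
    have hlt1 : σ⁻¹ m < a + b := hσ.inv_lt hm'
    have hlt3 : σ⁻¹ (m + 2) < a + b := hσ.inv_lt hm2
    have hc2' : a ≤ σ⁻¹ (m + 1 + 1) := hc2
    have hlt3' : σ⁻¹ (m + 1 + 1) < a + b := hlt3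
    have hv : σ⁻¹ (m + 2) - a = (σ⁻¹ m - a) + 1 := by
      rw [show m + 2 = (m + 1) + 1 from rfl]; omega
    rw [hv1, hv3, hb2 _ ha1, hb2 _ hc2, hv] at h13
    push_cast at h13
    exact zmod_one he (by linear_combination h13)
  · omega

end Mixed

lemma swap_lt {m u v : ℕ} (huv : u < v) (hne : ¬(u = m ∧ v = m + 1)) :
    Equiv.swap m (m + 1) u < Equiv.swap m (m + 1) v := by
  rw [Equiv.swap_apply_def, Equiv.swap_apply_def]
  split_ifs <;> omega

lemma inv_swap_mul (σ : Equiv.Perm ℕ) (m q : ℕ) :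
    (Equiv.swap m (m + 1) * σ)⁻¹ q = σ⁻¹ (Equiv.swap m (m + 1) q) := by
  rw [mul_inv_rev, Equiv.swap_inv]
  rfl

section SwapReal

variable {base i : ℕ → ZMod e}

lemma swap_real (he : 3 ≤ e) (hb1 : ∀ s, s < a → base s = j + (s : ZMod e))
    (hb2 : ∀ s, a ≤ s → base s = k - ((s - a : ℕ) : ZMod e))
    {σ : Equiv.Perm ℕ} (hr : IsReal a b base i σ) {m : ℕ} (hm : m + 1 < a + b)
    (heq : i m = i (m + 1)) : IsReal a b base i (Equiv.swap m (m + 1) * σ) := by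
  have hσ := hr.1
  have hmx := mixed he hb1 hb2 hr hm heq
  constructor
  · refine ⟨?_, ?_, ?_⟩
    · intro x hx
      have h1 : σ x = x := hσ.1 x hx
      simp only [Equiv.Perm.mul_apply, h1]
      exact Equiv.swap_apply_of_ne_of_ne (by omega) (by omega)
    · intro x y hxy hy
      have h1 : σ x < σ y := hσ.2.1 x y hxy hy
      simp only [Equiv.Perm.mul_apply]
      apply swap_lt h1
      rintro ⟨hx', hy'⟩
      have hxm : σ⁻¹ m = x := by rw [← hx', (Equiv.Perm.inv_apply_self σ)]
      have hym : σ⁻¹ (m + 1) = y := by rw [← hy', (Equiv.Perm.inv_apply_self σ)]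
      rcases hmx with ⟨c1, c2⟩ | ⟨c1, c2⟩ <;> omega
    · intro x y hx hxy hy
      have h1 : σ x < σ y := hσ.2.2 x y hx hxy hy
      simp only [Equiv.Perm.mul_apply]
      apply swap_lt h1
      rintro ⟨hx', hy'⟩
      have hxm : σ⁻¹ m = x := by rw [← hx', (Equiv.Perm.inv_apply_self σ)]
      have hym : σ⁻¹ (m + 1) = y := by rw [← hy', (Equiv.Perm.inv_apply_self σ)]
      rcases hmx with ⟨c1, c2⟩ | ⟨c1, c2⟩ <;> omega
  · funext p
    have hp : ∀ q, i q = base (σ⁻¹ q) := congrFun hr.2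
    show i p = base ((Equiv.swap m (m + 1) * σ)⁻¹ p)
    rw [inv_swap_mul]
    rcases eq_or_ne p m with rfl | hne1
    · rw [Equiv.swap_apply_left, ← hp (p + 1)]
      exact heq
    · rcases eq_or_ne p (m + 1) with rfl | hne2
      · rw [Equiv.swap_apply_right, ← hp m]
        exact heq.symm
      · rw [Equiv.swap_apply_of_ne_of_ne hne1 hne2, ← hp p]

end SwapReal

def nu (a b : ℕ) (σ : Equiv.Perm ℕ) : ℕ :=
  ∑ p ∈ Finset.range (a + b), p * (a + b - σ⁻¹ p)

lemma nu_arith {m X Y S : ℕ} (h : X < Y) :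
    S + (m + 1) * X + m * Y < S + (m + 1) * Y + m * X := by nlinarith

lemma nu_lt {σ : Equiv.Perm ℕ} (hσ : IsSh a b σ) {m : ℕ} (hm : m + 1 < a + b)
    (hd : σ⁻¹ (m + 1) < σ⁻¹ m) :
    nu a b (Equiv.swap m (m + 1) * σ) < nu a b σ := by
  have hAn : σ⁻¹ m < a + b := hσ.inv_lt (by omega)
  have hBn : σ⁻¹ (m + 1) < a + b := hσ.inv_lt hm
  have hmem1 : m ∈ Finset.range (a + b) := by simp; omega
  have hmem2 : m + 1 ∈ (Finset.range (a + b)).erase m := by simp; omega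
  have hsplit : ∀ f : ℕ → ℕ, ∑ p ∈ Finset.range (a + b), f p
      = (∑ p ∈ ((Finset.range (a + b)).erase m).erase (m + 1), f p) + f (m + 1) + f m := by
    intro f
    rw [Finset.sum_erase_add _ _ hmem2, Finset.sum_erase_add _ _ hmem1]
  unfold nu
  rw [hsplit, hsplit (fun p => p * (a + b - σ⁻¹ p))]
  have hcong : ∀ p ∈ ((Finset.range (a + b)).erase m).erase (m + 1),
      p * (a + b - (Equiv.swap m (m + 1) * σ)⁻¹ p) = p * (a + b - σ⁻¹ p) := by
    intro p hp
    simp only [Finset.mem_erase] at hp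
    rw [inv_swap_mul, Equiv.swap_apply_of_ne_of_ne hp.2.1 hp.1]
  rw [Finset.sum_congr rfl hcong]
  rw [inv_swap_mul, inv_swap_mul, Equiv.swap_apply_right, Equiv.swap_apply_left]
  exact nu_arith (by omega)



section DF

variable {base i : ℕ → ZMod e}

lemma df_aux (he : 3 ≤ e) (hb1 : ∀ s, s < a → base s = j + (s : ZMod e))
    (hb2 : ∀ s, a ≤ s → base s = k - ((s - a : ℕ) : ZMod e))
    {σ τ : Equiv.Perm ℕ} (hrσ : IsReal a b base i σ) (hrτ : IsReal a b base i τ)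
    (hdτ : DFree a b i τ) {p : ℕ} (hp : p < a + b)
    (hagree : ∀ q, q < p → (σ⁻¹ q < a ↔ τ⁻¹ q < a))
    (h1 : σ⁻¹ p < a) (h2 : a ≤ τ⁻¹ p) : False := by
  have hσ := hrσ.1
  have hτ := hrτ.1
  have hvσ : ∀ q, i q = base (σ⁻¹ q) := congrFun hrσ.2
  have hvτ : ∀ q, i q = base (τ⁻¹ q) := congrFun hrτ.2
  have cσ := count1 hσ hp h1
  have hfeq : ((Finset.range p).filter fun q => σ⁻¹ q < a)
      = ((Finset.range p).filter fun q => τ⁻¹ q < a) := by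
    apply Finset.filter_congr
    intro q hq
    simp only [Finset.mem_range] at hq
    exact hagree q hq
  have hAB := congrArg Finset.card hfeq
  have cτ' := count2 hτ hp h2
  have hfeq2 : ((Finset.range p).filter fun q => a ≤ σ⁻¹ q)
      = ((Finset.range p).filter fun q => a ≤ τ⁻¹ q) := by
    apply Finset.filter_congr
    intro q hq
    simp only [Finset.mem_range] at hq
    rw [← not_lt, ← not_lt]
    exact not_congr (hagree q hq)
  have ccσ := count_compl (σ := σ) (a := a) p
  have ccτ := count_compl (σ := τ) (a := a) p
  have hAB2 := congrArg Finset.card hfeq2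
  have hrel : τ⁻¹ p - a = p - σ⁻¹ p := by omega
  have hsle : σ⁻¹ p ≤ p := by omega
  have hvp : j + ((σ⁻¹ p : ℕ) : ZMod e) = k - ((p - σ⁻¹ p : ℕ) : ZMod e) := by
    rw [← hrel, ← hb1 _ h1, ← hb2 _ h2, ← hvσ p, ← hvτ p]
  have hp1 : p + 1 < a + b := by
    by_contra hc
    push_neg at hc
    have h3 := countTot hσ
    have h4 := countTot hτ
    rw [show a + b = p + 1 by omega, Finset.range_add_one, Finset.filter_insert] at h3 h4
    rw [if_pos h1, Finset.card_insert_of_notMem (by simp)] at h3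
    rw [if_neg (by omega)] at h4
    omega
  have cσ1 : ((Finset.range (p + 1)).filter fun q => σ⁻¹ q < a).card = σ⁻¹ p + 1 := by
    rw [Finset.range_add_one, Finset.filter_insert, if_pos h1,
      Finset.card_insert_of_notMem (by simp), cσ]
  have cτ1 : ((Finset.range (p + 1)).filter fun q => τ⁻¹ q < a).card = σ⁻¹ p := by
    rw [Finset.range_add_one, Finset.filter_insert, if_neg (by omega), ← hfeq, cσ]
  have cσ1' : ((Finset.range (p + 1)).filter fun q => a ≤ σ⁻¹ q).card = p - σ⁻¹ p := by
    rw [Finset.range_add_one, Finset.filter_insert, if_neg (by omega)]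
    omega
  have cτ1' : ((Finset.range (p + 1)).filter fun q => a ≤ τ⁻¹ q).card = (p - σ⁻¹ p) + 1 := by
    rw [Finset.range_add_one, Finset.filter_insert, if_pos h2,
      Finset.card_insert_of_notMem (by simp)]
    omega
  by_cases d1 : σ⁻¹ (p + 1) < a <;> by_cases d2 : τ⁻¹ (p + 1) < a
  · have g1 := count1 hσ hp1 d1
    rw [cσ1] at g1
    have g2 := count1 hτ hp1 d2
    rw [cτ1] at g2
    have w1 : i (p + 1) = j + ((σ⁻¹ p + 1 : ℕ) : ZMod e) := by
      rw [hvσ (p + 1), hb1 _ d1, ← g1]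
    have w2 : i (p + 1) = j + ((σ⁻¹ p : ℕ) : ZMod e) := by
      rw [hvτ (p + 1), hb1 _ d2, ← g2]
    have weq := w1.symm.trans w2
    push_cast at weq
    exact zmod_one he (by linear_combination weq)
  · push_neg at d2
    have g1 := count1 hσ hp1 d1
    rw [cσ1] at g1
    have g2 := count2 hτ hp1 d2
    rw [cτ1'] at g2
    have w1 : i (p + 1) = j + ((σ⁻¹ p + 1 : ℕ) : ZMod e) := by
      rw [hvσ (p + 1), hb1 _ d1, ← g1]
    have w2 : i (p + 1) = k - (((p - σ⁻¹ p) + 1 : ℕ) : ZMod e) := by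
      rw [hvτ (p + 1), hb2 _ d2, ← g2]
    have weq := w1.symm.trans w2
    push_cast at weq
    push_cast at hvp
    exact zmod_two he (by linear_combination weq - hvp)
  · push_neg at d1
    have g2 := count1 hτ hp1 d2
    rw [cτ1] at g2
    have hip : i p = i (p + 1) := by
      rw [hvσ p, hb1 _ h1, hvτ (p + 1), hb1 _ d2, ← g2]
    have := hdτ p hp1 hip
    omega
  · push_neg at d1 d2
    have g1 := count2 hσ hp1 d1
    rw [cσ1'] at g1
    have g2 := count2 hτ hp1 d2
    rw [cτ1'] at g2
    have w1 : i (p + 1) = k - ((p - σ⁻¹ p : ℕ) : ZMod e) := by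
      rw [hvσ (p + 1), hb2 _ d1, ← g1]
    have w2 : i (p + 1) = k - (((p - σ⁻¹ p) + 1 : ℕ) : ZMod e) := by
      rw [hvτ (p + 1), hb2 _ d2, ← g2]
    have weq := w1.symm.trans w2
    push_cast at weq
    exact zmod_one he (by linear_combination weq)

lemma df_unique (he : 3 ≤ e) (hb1 : ∀ s, s < a → base s = j + (s : ZMod e))
    (hb2 : ∀ s, a ≤ s → base s = k - ((s - a : ℕ) : ZMod e))
    {σ τ : Equiv.Perm ℕ} (hrσ : IsReal a b base i σ) (hrτ : IsReal a b base i τ)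
    (hdσ : DFree a b i σ) (hdτ : DFree a b i τ) : σ = τ := by
  apply determine hrσ.1 hrτ.1
  intro p
  induction p using Nat.strong_induction_on with
  | _ p ih =>
    intro hp
    constructor
    · intro h1
      by_contra h2
      exact df_aux he hb1 hb2 hrσ hrτ hdτ hp
        (fun q hq => ih q hq (by omega)) h1 (le_of_not_gt h2)
    · intro h1
      by_contra h2
      exact df_aux he hb1 hb2 hrτ hrσ hdσ hp
        (fun q hq => (ih q hq (by omega)).symm) h1 (le_of_not_gt h2)

end DF


def Gens (a b : ℕ) (i : ℕ → ZMod e) : Set (Equiv.Perm ℕ) :=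
  {π | ∃ m : ℕ, m + 1 < a + b ∧ i m = i (m + 1) ∧ π = Equiv.swap m (m + 1)}

section Reach

variable {base i : ℕ → ZMod e}

lemma not_df_exists {σ : Equiv.Perm ℕ} (h : ¬ DFree a b i σ) :
    ∃ m, m + 1 < a + b ∧ i m = i (m + 1) ∧ σ⁻¹ (m + 1) < σ⁻¹ m := by
  unfold DFree at h
  push_neg at h
  obtain ⟨m, hm, heq, hle⟩ := h
  refine ⟨m, hm, heq, ?_⟩
  have hne : σ⁻¹ m ≠ σ⁻¹ (m + 1) := fun hc => by
    have := (σ⁻¹ : Equiv.Perm ℕ).injective hc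
    omega
  omega

lemma reach (he : 3 ≤ e) (hb1 : ∀ s, s < a → base s = j + (s : ZMod e))
    (hb2 : ∀ s, a ≤ s → base s = k - ((s - a : ℕ) : ZMod e)) :
    ∀ N (σ : Equiv.Perm ℕ), nu a b σ ≤ N → IsReal a b base i σ →
      ∀ τ : Equiv.Perm ℕ, IsReal a b base i τ → DFree a b i τ →
        ∃ h ∈ Subgroup.closure (Gens a b i), σ = h * τ := by
  intro N
  induction N with
  | zero =>
    intro σ hν hσ τ hτ hdτ
    by_cases hdf : DFree a b i σ
    · exact ⟨1, one_mem _, by rw [df_unique he hb1 hb2 hσ hτ hdf hdτ, one_mul]⟩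
    · obtain ⟨m, hm, heq, hd⟩ := not_df_exists hdf
      have := nu_lt hσ.1 hm hd
      omega
  | succ N ih =>
    intro σ hν hσ τ hτ hdτ
    by_cases hdf : DFree a b i σ
    · exact ⟨1, one_mem _, by rw [df_unique he hb1 hb2 hσ hτ hdf hdτ, one_mul]⟩
    · obtain ⟨m, hm, heq, hd⟩ := not_df_exists hdf
      have hlt := nu_lt hσ.1 hm hd
      have hσ' := swap_real he hb1 hb2 hσ hm heq
      obtain ⟨h, hh, hEq⟩ := ih _ (by omega) hσ' τ hτ hdτ
      refine ⟨Equiv.swap m (m + 1) * h,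
        mul_mem (Subgroup.subset_closure ⟨m, hm, heq, rfl⟩) hh, ?_⟩
      rw [mul_assoc, ← hEq, ← mul_assoc, Equiv.swap_mul_self, one_mul]

lemma exists_df (he : 3 ≤ e) (hb1 : ∀ s, s < a → base s = j + (s : ZMod e))
    (hb2 : ∀ s, a ≤ s → base s = k - ((s - a : ℕ) : ZMod e)) :
    ∀ N (σ : Equiv.Perm ℕ), nu a b σ ≤ N → IsReal a b base i σ →
      ∃ τ : Equiv.Perm ℕ, IsReal a b base i τ ∧ DFree a b i τ := by
  intro N
  induction N with
  | zero =>
    intro σ hν hσ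
    by_cases hdf : DFree a b i σ
    · exact ⟨σ, hσ, hdf⟩
    · obtain ⟨m, hm, heq, hd⟩ := not_df_exists hdf
      have := nu_lt hσ.1 hm hd
      omega
  | succ N ih =>
    intro σ hν hσ
    by_cases hdf : DFree a b i σ
    · exact ⟨σ, hσ, hdf⟩
    · obtain ⟨m, hm, heq, hd⟩ := not_df_exists hdf
      have hlt := nu_lt hσ.1 hm hd
      exact ih _ (by omega) (swap_real he hb1 hb2 hσ hm heq)

lemma closure_real (he : 3 ≤ e) (hb1 : ∀ s, s < a → base s = j + (s : ZMod e))
    (hb2 : ∀ s, a ≤ s → base s = k - ((s - a : ℕ) : ZMod e))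
    {h : Equiv.Perm ℕ} (hh : h ∈ Subgroup.closure (Gens a b i)) :
    ∀ σ, IsReal a b base i σ → IsReal a b base i (h * σ) := by
  refine fun σ hσ =>
    (Subgroup.closure_induction
      (p := fun g _ => (∀ σ, IsReal a b base i σ → IsReal a b base i (g * σ)) ∧
        (∀ σ, IsReal a b base i σ → IsReal a b base i (g⁻¹ * σ)))
      ?_ ?_ ?_ ?_ hh).1 σ hσ
  · rintro x ⟨m, hm, heq, rfl⟩
    constructor
    · intro σ hσ'
      exact swap_real he hb1 hb2 hσ' hm heq
    · intro σ hσ'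
      rw [Equiv.swap_inv]
      exact swap_real he hb1 hb2 hσ' hm heq
  · constructor <;> intro σ hσ' <;> simpa using hσ'
  · rintro x y hx hy ⟨hx1, hx2⟩ ⟨hy1, hy2⟩
    constructor
    · intro σ hσ'
      rw [mul_assoc]
      exact hx1 _ (hy1 _ hσ')
    · intro σ hσ'
      rw [mul_inv_rev, mul_assoc]
      exact hy2 _ (hx2 _ hσ')
  · rintro x hx ⟨h1, h2⟩
    refine ⟨h2, fun σ hσ' => ?_⟩
    rw [inv_inv]
    exact h1 σ hσ'

end Reach

lemma sh_finite : {σ : Equiv.Perm ℕ | IsSh a b σ}.Finite := by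
  have hinj : Set.InjOn (fun σ : Equiv.Perm ℕ => fun p : Fin (a + b) => decide (σ⁻¹ (p : ℕ) < a))
      {σ | IsSh a b σ} := by
    intro σ hσ τ hτ hfun
    apply determine hσ hτ
    intro p hp
    have := congrFun hfun ⟨p, hp⟩
    simpa using this
  exact Set.Finite.of_finite_image (Set.toFinite _) hinj

section Count

variable {base i : ℕ → ZMod e}

lemma M_sep (he : 3 ≤ e) (hb1 : ∀ s, s < a → base s = j + (s : ZMod e))
    (hb2 : ∀ s, a ≤ s → base s = k - ((s - a : ℕ) : ZMod e))
    {σ : Equiv.Perm ℕ} (hr : IsReal a b base i σ) {m m' : ℕ}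
    (h1 : m + 1 < a + b) (h2 : i m = i (m + 1))
    (h1' : m' + 1 < a + b) (h2' : i m' = i (m' + 1)) (hne : m ≠ m') :
    m' ≠ m + 1 ∧ m ≠ m' + 1 := by
  constructor
  · rintro rfl
    exact nonadj he hb1 hb2 hr (show m + 2 < a + b from h1') h2 h2'
  · rintro rfl
    exact nonadj he hb1 hb2 hr (show m' + 2 < a + b from h1) h2' h2

lemma count_real (he : 3 ≤ e) (hb1 : ∀ s, s < a → base s = j + (s : ZMod e))
    (hb2 : ∀ s, a ≤ s → base s = k - ((s - a : ℕ) : ZMod e))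
    (τ0 : Equiv.Perm ℕ) (h0 : IsReal a b base i τ0) (hd0 : DFree a b i τ0) :
    ∀ U : Finset ℕ, U ⊆ (Finset.range (a + b - 1)).filter (fun m => i m = i (m + 1)) →
      {σ : Equiv.Perm ℕ | IsReal a b base i σ ∧
        ∀ m ∈ ((Finset.range (a + b - 1)).filter fun m => i m = i (m + 1)) \ U,
          σ⁻¹ m < σ⁻¹ (m + 1)}.ncard = 2 ^ U.card := by
  have memM : ∀ {m : ℕ}, m ∈ (Finset.range (a + b - 1)).filter (fun m => i m = i (m + 1)) ↔
      (m + 1 < a + b ∧ i m = i (m + 1)) := by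
    intro m
    rw [Finset.mem_filter, Finset.mem_range]
    constructor
    · rintro ⟨x1, x2⟩; exact ⟨by omega, x2⟩
    · rintro ⟨x1, x2⟩; exact ⟨by omega, x2⟩
  intro U
  induction U using Finset.induction_on with
  | empty =>
    intro _
    rw [Finset.sdiff_empty]
    have hone : {σ : Equiv.Perm ℕ | IsReal a b base i σ ∧
        ∀ m ∈ (Finset.range (a + b - 1)).filter (fun m => i m = i (m + 1)),
          σ⁻¹ m < σ⁻¹ (m + 1)} = {τ0} := by
      ext σ
      simp only [Set.mem_setOf_eq, Set.mem_singleton_iff]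
      constructor
      · rintro ⟨hr, hdf⟩
        exact df_unique he hb1 hb2 hr h0
          (fun m hm heq => hdf m (memM.mpr ⟨hm, heq⟩)) hd0
      · rintro rfl
        exact ⟨h0, fun m hm => hd0 m (memM.mp hm).1 (memM.mp hm).2⟩
    rw [hone, Set.ncard_singleton, Finset.card_empty, pow_zero]
  | @insert m0 U hm0U ih =>
    intro hsub
    have hUM : U ⊆ (Finset.range (a + b - 1)).filter (fun m => i m = i (m + 1)) :=
      (Finset.subset_insert m0 U).trans hsub
    have hm0M := hsub (Finset.mem_insert_self m0 U)
    have hm0 : m0 + 1 < a + b := (memM.mp hm0M).1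
    have heq0 : i m0 = i (m0 + 1) := (memM.mp hm0M).2
    -- separation for other members of M
    have hsep : ∀ {m : ℕ}, m + 1 < a + b → i m = i (m + 1) → m ≠ m0 →
        (m ≠ m0 ∧ m ≠ m0 + 1 ∧ m + 1 ≠ m0 ∧ m + 1 ≠ m0 + 1) := by
      intro m hm heq hne
      have := M_sep he hb1 hb2 h0 hm heq hm0 heq0 hne
      exact ⟨hne, this.2, fun hc => this.1 hc.symm, fun hc => hne (by omega)⟩
    have hEsub : {σ : Equiv.Perm ℕ | IsReal a b base i σ ∧
        ∀ m ∈ ((Finset.range (a + b - 1)).filter fun m => i m = i (m + 1)) \ U,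
          σ⁻¹ m < σ⁻¹ (m + 1)} ⊆ {σ | IsSh a b σ} := fun σ h => h.1.1
    have hfin : {σ : Equiv.Perm ℕ | IsReal a b base i σ ∧
        ∀ m ∈ ((Finset.range (a + b - 1)).filter fun m => i m = i (m + 1)) \ U,
          σ⁻¹ m < σ⁻¹ (m + 1)}.Finite := sh_finite.subset hEsub
    have hsplit : {σ : Equiv.Perm ℕ | IsReal a b base i σ ∧
        ∀ m ∈ ((Finset.range (a + b - 1)).filter fun m => i m = i (m + 1)) \ insert m0 U,
          σ⁻¹ m < σ⁻¹ (m + 1)}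
        = {σ : Equiv.Perm ℕ | IsReal a b base i σ ∧
            ∀ m ∈ ((Finset.range (a + b - 1)).filter fun m => i m = i (m + 1)) \ U,
              σ⁻¹ m < σ⁻¹ (m + 1)}
          ∪ (fun σ => Equiv.swap m0 (m0 + 1) * σ) ''
            {σ : Equiv.Perm ℕ | IsReal a b base i σ ∧
              ∀ m ∈ ((Finset.range (a + b - 1)).filter fun m => i m = i (m + 1)) \ U,
                σ⁻¹ m < σ⁻¹ (m + 1)} := by
      ext σ
      simp only [Set.mem_setOf_eq, Set.mem_union, Set.mem_image]
      constructor
      · rintro ⟨hr, hcond⟩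
        by_cases hdes : σ⁻¹ m0 < σ⁻¹ (m0 + 1)
        · left
          refine ⟨hr, fun m hm => ?_⟩
          rcases Finset.mem_sdiff.mp hm with ⟨hmM, hmU⟩
          by_cases hmm : m = m0
          · subst hmm; exact hdes
          · exact hcond m (Finset.mem_sdiff.mpr ⟨hmM, by
              simp only [Finset.mem_insert]; push_neg; exact ⟨hmm, hmU⟩⟩)
        · right
          refine ⟨Equiv.swap m0 (m0 + 1) * σ, ⟨swap_real he hb1 hb2 hr hm0 heq0, ?_⟩, ?_⟩
          · intro m hm
            rcases Finset.mem_sdiff.mp hm with ⟨hmM, hmU⟩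
            by_cases hmm : m = m0
            · subst hmm
              rw [inv_swap_mul, inv_swap_mul, Equiv.swap_apply_left, Equiv.swap_apply_right]
              have hne : σ⁻¹ m ≠ σ⁻¹ (m + 1) := fun hc => by
                have := (σ⁻¹ : Equiv.Perm ℕ).injective hc
                omega
              omega
            · obtain ⟨x1, x2, x3, x4⟩ := hsep (memM.mp hmM).1 (memM.mp hmM).2 hmm
              rw [inv_swap_mul, inv_swap_mul, Equiv.swap_apply_of_ne_of_ne x1 x2,
                Equiv.swap_apply_of_ne_of_ne x3 x4]
              exact hcond m (Finset.mem_sdiff.mpr ⟨hmM, by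
                simp only [Finset.mem_insert]; push_neg; exact ⟨hmm, hmU⟩⟩)
          · rw [← mul_assoc, Equiv.swap_mul_self, one_mul]
      · rintro (⟨hr, hcond⟩ | ⟨σ', ⟨hr, hcond⟩, rfl⟩)
        · refine ⟨hr, fun m hm => ?_⟩
          rcases Finset.mem_sdiff.mp hm with ⟨hmM, hmU⟩
          exact hcond m (Finset.mem_sdiff.mpr ⟨hmM, fun hc => hmU (Finset.mem_insert_of_mem hc)⟩)
        · refine ⟨swap_real he hb1 hb2 hr hm0 heq0, fun m hm => ?_⟩
          rcases Finset.mem_sdiff.mp hm with ⟨hmM, hmU⟩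
          have hmm : m ≠ m0 := fun hc => hmU (by rw [hc]; exact Finset.mem_insert_self _ _)
          obtain ⟨x1, x2, x3, x4⟩ := hsep (memM.mp hmM).1 (memM.mp hmM).2 hmm
          rw [inv_swap_mul, inv_swap_mul, Equiv.swap_apply_of_ne_of_ne x1 x2,
            Equiv.swap_apply_of_ne_of_ne x3 x4]
          exact hcond m (Finset.mem_sdiff.mpr ⟨hmM, fun hc => hmU (Finset.mem_insert_of_mem hc)⟩)
    have hdisj : Disjoint
        {σ : Equiv.Perm ℕ | IsReal a b base i σ ∧
            ∀ m ∈ ((Finset.range (a + b - 1)).filter fun m => i m = i (m + 1)) \ U,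
              σ⁻¹ m < σ⁻¹ (m + 1)}
        ((fun σ => Equiv.swap m0 (m0 + 1) * σ) ''
          {σ : Equiv.Perm ℕ | IsReal a b base i σ ∧
              ∀ m ∈ ((Finset.range (a + b - 1)).filter fun m => i m = i (m + 1)) \ U,
                σ⁻¹ m < σ⁻¹ (m + 1)}) := by
      rw [Set.disjoint_left]
      rintro σ ⟨hr1, hc1⟩ ⟨σ', ⟨hr2, hc2⟩, rfl⟩
      have hm0T : m0 ∈ ((Finset.range (a + b - 1)).filter fun m => i m = i (m + 1)) \ U :=
        Finset.mem_sdiff.mpr ⟨hm0M, hm0U⟩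
      have d1 := hc1 m0 hm0T
      have d2 := hc2 m0 hm0T
      rw [inv_swap_mul, inv_swap_mul, Equiv.swap_apply_left, Equiv.swap_apply_right] at d1
      omega
    rw [hsplit, Set.ncard_union_eq hdisj hfin (hfin.image _),
      Set.ncard_image_of_injective _ (mul_right_injective _), ih hUM,
      Finset.card_insert_of_notMem hm0U, pow_succ]
    omega

end Count

end ShuffleCosetAux

open ShuffleCosetAux in
/-- Let `i` be a shuffle of `S⁺ = (j, ..., j+a-1)` and `S⁻ = (k, ..., k-b+1)` in
`ℤ/eℤ` (e ≥ 3), let `σᵢ` be the unique minimal-length `(a,b)`-shuffle realizing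
`i`, and let `H(i)` be the subgroup generated by the simple transpositions
`s_m = (m, m+1)` with `i m = i (m+1)`.  Then the set of shuffles realizing `i`
is exactly `{h * σᵢ | h ∈ H(i)}`; in particular its cardinality is `2^t` where
`t = #{m | i m = i (m + 1)}`. -/
theorem shuffle_coset_description (e a b : ℕ) (he : 3 ≤ e) (j k : ZMod e)
    (base : ℕ → ZMod e)
    (hbase : base = fun s : ℕ => if s < a then j + (s : ZMod e) else k - ((s - a : ℕ) : ZMod e))
    (Shuf : Set (Equiv.Perm ℕ))
    (hShuf : Shuf = {σ | (∀ x, a + b ≤ x → σ x = x) ∧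
      (∀ x y, x < y → y < a → σ x < σ y) ∧
      (∀ x y, a ≤ x → x < y → y < a + b → σ x < σ y)})
    (len : Equiv.Perm ℕ → ℕ)
    (hlen : len = fun σ =>
      ((Finset.range (a + b) ×ˢ Finset.range (a + b)).filter
        fun q => q.1 < q.2 ∧ σ q.2 < σ q.1).card)
    (i : ℕ → ZMod e)
    (H : Subgroup (Equiv.Perm ℕ))
    (hH : H = Subgroup.closure
      {π | ∃ m : ℕ, m + 1 < a + b ∧ i m = i (m + 1) ∧ π = Equiv.swap m (m + 1)})
    (σi : Equiv.Perm ℕ)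
    (hσi : σi ∈ Shuf ∧ i = base ∘ ⇑σi⁻¹ ∧
      ∀ τ ∈ Shuf, i = base ∘ ⇑τ⁻¹ → len σi ≤ len τ) :
    {τ | τ ∈ Shuf ∧ i = base ∘ ⇑τ⁻¹} = (fun h => h * σi) '' (H : Set (Equiv.Perm ℕ)) ∧
    Set.ncard {τ | τ ∈ Shuf ∧ i = base ∘ ⇑τ⁻¹} =
      2 ^ (((Finset.range (a + b - 1)).filter fun m => i m = i (m + 1)).card) := by
  classical
  have hb1 : ∀ s, s < a → base s = j + (s : ZMod e) := by
    intro s hs; rw [hbase]; simp [hs]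
  have hb2 : ∀ s, a ≤ s → base s = k - ((s - a : ℕ) : ZMod e) := by
    intro s hs; rw [hbase]; simp [Nat.not_lt.mpr hs]
  have hShuf' : ∀ σ : Equiv.Perm ℕ, σ ∈ Shuf ↔ IsSh a b σ := by
    intro σ; rw [hShuf]; exact Iff.rfl
  have hset : {τ : Equiv.Perm ℕ | τ ∈ Shuf ∧ i = base ∘ ⇑τ⁻¹}
      = {σ : Equiv.Perm ℕ | IsReal a b base i σ} := by
    ext τ
    constructor
    · rintro ⟨h1, h2⟩; exact ⟨(hShuf' τ).mp h1, h2⟩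
    · rintro ⟨h1, h2⟩; exact ⟨(hShuf' τ).mpr h1, h2⟩
  have hreal_i : IsReal a b base i σi := ⟨(hShuf' σi).mp hσi.1, hσi.2.1⟩
  have hHG : H = Subgroup.closure (Gens a b i) := hH
  obtain ⟨τ0, h0, hd0⟩ := exists_df he hb1 hb2 (nu a b σi) σi le_rfl hreal_i
  obtain ⟨h0i, hh0i, hEq0⟩ := reach he hb1 hb2 (nu a b σi) σi le_rfl hreal_i τ0 h0 hd0
  constructor
  · rw [hset, hHG]
    ext σ
    simp only [Set.mem_setOf_eq, Set.mem_image, SetLike.mem_coe]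
    constructor
    · intro hr
      obtain ⟨h, hh, hEq⟩ := reach he hb1 hb2 (nu a b σ) σ le_rfl hr τ0 h0 hd0
      refine ⟨h * h0i⁻¹, mul_mem hh (inv_mem hh0i), ?_⟩
      rw [hEq, hEq0]
      group
    · rintro ⟨h, hh, rfl⟩
      exact closure_real he hb1 hb2 hh σi hreal_i
  · rw [hset]
    have hc := count_real he hb1 hb2 τ0 h0 hd0
      ((Finset.range (a + b - 1)).filter fun m => i m = i (m + 1)) (subset_refl _)
    rw [Finset.sdiff_self] at hc
    rw [← hc]
    congr 1
    ext σ
    simp
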